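/- Let Γ be a countably infinite group with a proper right-invariant metric d, and let P be a local extendable Γ-ideal. Then the shift action of Γ on C^Γ, where C = (ℕ → Bool) is the Cantor space and the shift is (γ · x)(δ) = x(δγ), admits a Baire measurable P-coloring, i.e., a Baire measurable Col(P)-coloring. -/

import Mathlib

open Set Function Topology

namespace DescColor

/-- A set is *Baire measurable* if it differs from an open set by a meager set. -/
def BaireMSet {X : Type*} [TopologicalSpace X] (S : Set X) : Prop :=
  ∃ U : Set X, IsOpen U ∧ IsMeagre (symmDiff S U)

/-- A function is *Baire measurable* if preimages of measurable (Borel) sets are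
Baire measurable. -/
def BaireMFun {X Y : Type*} [TopologicalSpace X] [MeasurableSpace Y] (f : X → Y) : Prop :=
  ∀ B : Set Y, MeasurableSet B → BaireMSet (f ⁻¹' B)

variable {Γ : Type*}

/-- The shift action of `Γ` on colorings `Γ → ℕ`: `(γ · ω)(δ) = ω (δ γ)`. -/
def shift [Group Γ] (γ : Γ) (ω : Γ → ℕ) : Γ → ℕ := fun δ => ω (δ * γ)

/-- A subshift: a closed shift-invariant set of colorings. -/
def IsSubshift [Group Γ] (Ω : Set (Γ → ℕ)) : Prop :=
  IsClosed Ω ∧ ∀ (γ : Γ), ∀ ω ∈ Ω, shift γ ω ∈ Ω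

/-- The coding map `π_f(x)(γ) = f (γ • x)`. -/
def codingMap [Group Γ] {X : Type*} [MulAction Γ X] (f : X → ℕ) (x : X) : Γ → ℕ :=
  fun γ => f (γ • x)

/-- The action of `Γ` on `X` admits a Baire measurable `Ω`-coloring. -/
def HasBMColoring [Group Γ] (X : Type*) [TopologicalSpace X] [MulAction Γ X]
    (Ω : Set (Γ → ℕ)) : Prop :=
  ∃ f : X → ℕ, BaireMFun f ∧ {x : X | codingMap f x ∈ Ω} ∈ residual X

/-- The action of `Γ` on `X` is generically smooth. -/
def GenSmooth (Γ : Type*) [Group Γ] (X : Type*) [TopologicalSpace X] [MulAction Γ X] : Prop :=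
  ∃ f : X → ℝ, BaireMFun f ∧ ∀ x y : X, f x = f y ↔ ∃ γ : Γ, γ • x = y

/-- The shift action of `Γ` on `ℕ^Γ` admits a Baire measurable `Ω`-coloring. -/
def ShiftHasBMColoring (Γ : Type*) [Group Γ] (Ω : Set (Γ → ℕ)) : Prop :=
  ∃ f : (Γ → ℕ) → ℕ, BaireMFun f ∧
    {ω : Γ → ℕ | (fun γ : Γ => f (shift γ ω)) ∈ Ω} ∈ residual (Γ → ℕ)

/-- A free continuous action of `Γ` on a Polish space. -/
structure FreePolishAction (Γ : Type*) [Group Γ] where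
  X : Type
  ts : TopologicalSpace X
  polish : @PolishSpace X ts
  smul : Γ → X → X
  one_smul' : ∀ x, smul 1 x = x
  mul_smul' : ∀ γ δ x, smul (γ * δ) x = smul γ (smul δ x)
  cont : ∀ γ : Γ, @Continuous X X ts ts (smul γ)
  free : ∀ (γ : Γ) (x : X), smul γ x = x → γ = 1

/-- A free continuous action on a Polish space admits a Baire measurable `Ω`-coloring. -/
def FreePolishAction.HasBMCol [Group Γ] (α : FreePolishAction Γ) (Ω : Set (Γ → ℕ)) : Prop :=
  letI := α.ts
  ∃ f : α.X → ℕ, BaireMFun f ∧ {x : α.X | (fun γ : Γ => f (α.smul γ x)) ∈ Ω} ∈ residual α.X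

/-- A free continuous action on a Polish space is generically smooth. -/
def FreePolishAction.IsGenSmooth [Group Γ] (α : FreePolishAction Γ) : Prop :=
  letI := α.ts
  ∃ f : α.X → ℝ, BaireMFun f ∧ ∀ x y : α.X, f x = f y ↔ ∃ γ : Γ, α.smul γ x = y

/-- A subshift is *hard* if every free continuous action of `Γ` on a Polish space that
admits a Baire measurable `Ω`-coloring is generically smooth. -/
def Hard (Γ : Type*) [Group Γ] (Ω : Set (Γ → ℕ)) : Prop :=
  ∀ α : FreePolishAction Γ, α.HasBMCol Ω → α.IsGenSmooth

/-- A subshift is *easy* if every free continuous action of `Γ` on a Polish space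
admits a Baire measurable `Ω`-coloring. -/
def Easy (Γ : Type*) [Group Γ] (Ω : Set (Γ → ℕ)) : Prop :=
  ∀ α : FreePolishAction Γ, α.HasBMCol Ω

/-- Finite partial colorings of `Γ`: partial maps `Γ ⇀ ℕ` with finite domain. -/
abbrev FPC (Γ : Type*) : Type _ := {φ : Γ → Option ℕ // {γ : Γ | φ γ ≠ none}.Finite}

/-- The domain of a finite partial coloring. -/
def domP (φ : FPC Γ) : Set Γ := {γ : Γ | φ.1 γ ≠ none}

/-- `Fin(Ω)`: the set of finite partial colorings extending to an element of `Ω`. -/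
def FinOf (Ω : Set (Γ → ℕ)) : Set (FPC Γ) :=
  {φ | ∃ ω ∈ Ω, ∀ (γ : Γ) (c : ℕ), φ.1 γ = some c → ω γ = c}

/-- `g : FPC Γ → Bool` codes (the set `Fin(Ω)` of) the subshift `Ω`. -/
def CodesSubshift [Group Γ] (g : FPC Γ → Bool) (Ω : Set (Γ → ℕ)) : Prop :=
  IsSubshift Ω ∧ ∀ φ : FPC Γ, g φ = true ↔ φ ∈ FinOf Ω

/-- The shift action of `Γ` on finite partial colorings: `(γ · φ)(δ) = φ(δγ)`. -/
def shiftP [Group Γ] (γ : Γ) (φ : FPC Γ) : FPC Γ :=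
  ⟨fun δ => φ.1 (δ * γ), by
    apply (φ.2.image fun δ => δ * γ⁻¹).subset
    intro δ hδ
    exact ⟨δ * γ, hδ, by simp⟩⟩

/-- The empty partial coloring. -/
def emptyP (Γ : Type*) : FPC Γ := ⟨fun _ => none, by simp⟩

/-- The union (join) of two partial colorings (values of `φ` take precedence). -/
def joinP (φ ψ : FPC Γ) : FPC Γ :=
  ⟨fun δ => match φ.1 δ with | some c => some c | none => ψ.1 δ, by
    apply (φ.2.union ψ.2).subset
    intro δ hδ
    by_cases h : φ.1 δ = none
    · right
      simp only [mem_setOf_eq, h] at hδ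
      exact hδ
    · exact Or.inl h⟩

/-- The union of a finite list of partial colorings. -/
def joinList (l : List (FPC Γ)) : FPC Γ := l.foldr joinP (emptyP Γ)

/-- `φ[γ, r]`: the restriction of `φ` to the closed ball `B(γ, r)`. -/
noncomputable def restrictBall [MetricSpace Γ] (φ : FPC Γ) (γ : Γ) (r : ℝ) : FPC Γ :=
  ⟨fun δ => if dist γ δ ≤ r then φ.1 δ else none, by
    apply φ.2.subset
    intro δ hδ
    by_cases h : dist γ δ ≤ r
    · simp only [mem_setOf_eq, if_pos h] at hδ
      exact hδ
    · simp only [mem_setOf_eq, if_neg h] at hδ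
      exact absurd rfl hδ⟩

/-- `φ ∪ {(γ, c)}`. -/
def insertP [DecidableEq Γ] (φ : FPC Γ) (γ : Γ) (c : ℕ) : FPC Γ :=
  ⟨fun δ => if δ = γ then some c else φ.1 δ, by
    apply (φ.2.insert γ).subset
    intro δ hδ
    by_cases h : δ = γ
    · exact Or.inl h
    · right
      simp only [mem_setOf_eq, if_neg h] at hδ
      exact hδ⟩

/-- The restriction of a total coloring `ω` to a finite set `S`. -/
def restrictTo [DecidableEq Γ] (ω : Γ → ℕ) (S : Finset Γ) : FPC Γ :=
  ⟨fun δ => if δ ∈ S then some (ω δ) else none, by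
    apply S.finite_toSet.subset
    intro δ hδ
    by_cases h : δ ∈ S
    · exact h
    · simp only [mem_setOf_eq, if_neg h] at hδ
      exact absurd rfl hδ⟩

/-- Post-composition of a partial coloring with `ρ : ℕ → ℕ`. -/
def mapP (ρ : ℕ → ℕ) (φ : FPC Γ) : FPC Γ :=
  ⟨fun δ => (φ.1 δ).map ρ, by
    apply φ.2.subset
    intro δ hδ
    intro h
    simp only [mem_setOf_eq, h] at hδ
    exact hδ rfl⟩

/-- `ψ` is a restriction of `φ`. -/
def IsRestrictionOf (ψ φ : FPC Γ) : Prop := ∀ δ : Γ, ψ.1 δ = none ∨ ψ.1 δ = φ.1 δ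

/-- A `Γ`-ideal: a shift-invariant set of finite partial colorings closed under
restrictions. -/
def IsGammaIdeal [Group Γ] (P : Set (FPC Γ)) : Prop :=
  (∀ (γ : Γ), ∀ φ ∈ P, shiftP γ φ ∈ P) ∧
  (∀ φ ∈ P, ∀ ψ : FPC Γ, IsRestrictionOf ψ φ → ψ ∈ P)

/-- An extendable `Γ`-ideal. -/
def IsExtendable [DecidableEq Γ] (P : Set (FPC Γ)) : Prop :=
  ∀ φ ∈ P, ∀ γ : Γ, φ.1 γ = none → ∃ c : ℕ, insertP φ γ c ∈ P

/-- `φ` and `ψ` are `R`-separated: `dist(dom φ, dom ψ) > R φ + R ψ`. -/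
def RSeparated [MetricSpace Γ] (R : FPC Γ → ℝ) (φ ψ : FPC Γ) : Prop :=
  ∀ γ ∈ domP φ, ∀ δ ∈ domP ψ, R φ + R ψ < dist γ δ

/-- The join property of a `Γ`-ideal `P`. -/
def HasJoinProperty [Group Γ] [MetricSpace Γ] (P : Set (FPC Γ)) : Prop :=
  ∃ R : FPC Γ → ℝ, (∀ φ, 0 ≤ R φ) ∧ (∀ (γ : Γ), ∀ φ ∈ P, R (shiftP γ φ) = R φ) ∧
    ∀ l : List (FPC Γ), (∀ φ ∈ l, φ ∈ P) → l.Pairwise (RSeparated R) → joinList l ∈ P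

/-- `P^loc_r`: partial colorings that are `r`-locally in `P`. -/
def LocallyIn [MetricSpace Γ] (P : Set (FPC Γ)) (r : ℕ → ℝ) : Set (FPC Γ) :=
  {φ | ∀ (γ : Γ) (c : ℕ), φ.1 γ = some c → restrictBall φ γ (r c) ∈ P}

/-- A local `Γ`-ideal. -/
def IsLocal [MetricSpace Γ] (P : Set (FPC Γ)) : Prop :=
  ∃ r : ℕ → ℝ, (∀ c, 0 ≤ r c) ∧ P = LocallyIn P r

/-- `Col(P)`: colorings all of whose finite restrictions lie in `P`. -/
def ColOf [DecidableEq Γ] (P : Set (FPC Γ)) : Set (Γ → ℕ) :=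
  {ω | ∀ S : Finset Γ, restrictTo ω S ∈ P}

/-! ### The space of Baire measurable functions -/

/-- Baire measurable functions from `X` to `Y`. -/
abbrev BMFunSub (X Y : Type*) [TopologicalSpace X] [MeasurableSpace Y] :=
  {f : X → Y // BaireMFun f}

/-- Equality on a comeager set. -/
def BFunRel {X Y : Type*} [TopologicalSpace X] [MeasurableSpace Y]
    (f g : BMFunSub X Y) : Prop := {x : X | f.1 x = g.1 x} ∈ residual X

/-- `B(X,Y)`: Baire measurable functions modulo equality on a comeager set. -/
abbrev BFun (X Y : Type*) [TopologicalSpace X] [MeasurableSpace Y] :=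
  Quot (BFunRel (X := X) (Y := Y))

/-- `[U, A]`: the classes of functions `f` with `U ∖ f⁻¹(A)` meager. -/
def forceSet {X Y : Type*} [TopologicalSpace X] [MeasurableSpace Y]
    (U : Set X) (A : Set Y) : Set (BFun X Y) :=
  {F | ∃ f : BMFunSub X Y, Quot.mk BFunRel f = F ∧ IsMeagre (U \ f.1 ⁻¹' A)}

/-- `Σ(X,Y)`: the σ-algebra generated by the sets `[U, A]` for `U` nonempty open
and `A` Borel. -/
def SigmaXY (X Y : Type*) [TopologicalSpace X] [MeasurableSpace Y] :
    MeasurableSpace (BFun X Y) :=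
  MeasurableSpace.generateFrom
    {S | ∃ (U : Set X) (A : Set Y), IsOpen U ∧ U.Nonempty ∧ MeasurableSet A ∧ S = forceSet U A}

/-! ### Construction -/

section Construction

open scoped Classical

variable [Group Γ] [DecidableEq Γ] [MetricSpace Γ]

/-- The shift on the space `(Γ → ℕ → Bool)`. -/
def sx (γ : Γ) (x : Γ → ℕ → Bool) : Γ → ℕ → Bool := fun δ => x (δ * γ)

lemma sx_sx (γ γ' : Γ) (x : Γ → ℕ → Bool) : sx γ (sx γ' x) = sx (γ * γ') x := by
  funext δ; simp [sx, mul_assoc]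

lemma sx_one (x : Γ → ℕ → Bool) : sx (1 : Γ) x = x := by funext δ; simp [sx]

structure Cell (Γ : Type*) where
  cond : Set (Γ → ℕ → Bool)
  color : ℕ
  stage : ℕ
  rho : ℝ
  D : ℝ
  cfg : Γ → Option ℕ
  psi : FPC Γ

instance : Inhabited (Cell Γ) := ⟨⟨∅, 0, 0, 0, 0, fun _ => none, emptyP Γ⟩⟩

/-- The (unique) index of a cell in `L` whose condition contains `y`. -/
noncomputable def occL (L : List (Cell Γ)) (y : Γ → ℕ → Bool) : Option ℕ :=
  if h : ∃ i, i < L.length ∧ y ∈ (L.getD i default).cond then some (Nat.find h) else none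

/-- The least color extending `φ` at the identity, if `φ ∈ P`. -/
noncomputable def cellColor (P : Set (FPC Γ)) (hext : IsExtendable P) (φ : FPC Γ) : ℕ :=
  if h : φ ∈ P ∧ φ.1 1 = none then Nat.find (hext φ h.1 1 h.2) else 0

variable (hproper : ∀ (γ : Γ) (ρ : ℝ), (Metric.closedBall γ ρ).Finite)
variable (P : Set (FPC Γ)) (hext : IsExtendable P) (r : ℕ → ℝ)

def listMax (l : List ℝ) : ℝ := l.foldr max 0

lemma listMax_nonneg (l : List ℝ) : 0 ≤ listMax l := by
  induction l with
  | nil => simp [listMax]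
  | cons a l ih => simp only [listMax, List.foldr_cons]; exact le_max_of_le_right ih

lemma le_listMax {l : List ℝ} {a : ℝ} (h : a ∈ l) : a ≤ listMax l := by
  induction l with
  | nil => simp at h
  | cons b l ih =>
    rcases List.mem_cons.1 h with h | h
    · subst h; exact le_max_left _ _
    · exact le_trans (ih h) (le_max_right _ _)

/-- maximal color radius in a list of cells -/
noncomputable def sRmax (L : List (Cell Γ)) : ℝ := listMax (L.map fun c => r c.color)

/-- configuration radius of stage `m` -/
noncomputable def sRho (L : List (Cell Γ)) (m : ℕ) : ℝ :=
  sRmax r L + listMax (L.map Cell.rho) + listMax (L.map Cell.D) + m + 1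

noncomputable def sBall (L : List (Cell Γ)) (m : ℕ) : Finset Γ :=
  (hproper 1 (sRho r L m)).toFinset

noncomputable def sCfgs (L : List (Cell Γ)) (m : ℕ) : Finset (Γ → Option ℕ) :=
  letI := Classical.decEq (Γ → Option ℕ)
  ((sBall hproper r L m).pi fun _ =>
      insert none ((Finset.range L.length).image some)).image
    (fun g γ => if h : γ ∈ sBall hproper r L m then g γ h else none)

/-- the partial coloring associated to a configuration -/
noncomputable def phiOf (L : List (Cell Γ)) (m : ℕ) (t : Γ → Option ℕ) : FPC Γ :=
  ⟨fun γ => if γ ∈ sBall hproper r L m then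
      (t γ).map (fun i => (L.getD i default).color) else none, by
    apply (sBall hproper r L m).finite_toSet.subset
    intro γ hγ
    by_cases h : γ ∈ sBall hproper r L m
    · exact h
    · simp only [mem_setOf_eq, if_neg h] at hγ; exact absurd rfl hγ⟩

noncomputable def sColor (L : List (Cell Γ)) (m : ℕ) (t : Γ → Option ℕ) : ℕ :=
  cellColor P hext (phiOf hproper r L m t)

noncomputable def sM (L : List (Cell Γ)) (m : ℕ) : ℝ :=
  listMax ((sCfgs hproper r L m).toList.map fun t => r (sColor hproper P hext r L m t))

noncomputable def sD (L : List (Cell Γ)) (m : ℕ) : ℝ :=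
  2 * sRho r L m + 2 * sRmax r L + 2 * sM hproper P hext r L m + 1

noncomputable def mkCell (L : List (Cell Γ)) (m : ℕ) (t : Γ → Option ℕ) : Cell Γ :=
  { cond := if (phiOf hproper r L m t) ∈ P ∧ (phiOf hproper r L m t).1 1 = none then
      {x | (∀ β, dist β 1 ≤ sRho r L m → occL L (sx β x) = t β) ∧
           x 1 m = true ∧
           (∀ β, dist β 1 ≤ sD hproper P hext r L m → β ≠ 1 → x β m = false) ∧
           (∀ β, sRho r L m < dist β 1 → dist β 1 ≤ sD hproper P hext r L m →
             occL L (sx β x) = none)}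
      else ∅
    color := sColor hproper P hext r L m t
    stage := m
    rho := sRho r L m
    D := sD hproper P hext r L m
    cfg := t
    psi := insertP (phiOf hproper r L m t) 1 (sColor hproper P hext r L m t) }

noncomputable def newStage (L : List (Cell Γ)) (m : ℕ) : List (Cell Γ) :=
  (sCfgs hproper r L m).toList.map (mkCell hproper P hext r L m)

noncomputable def stageData : ℕ → List (Cell Γ)
  | 0 => []
  | m+1 => stageData m ++ newStage hproper P hext r (stageData m) m

noncomputable def cellAt (i : ℕ) : Cell Γ := (stageData hproper P hext r (i+1)).getD i default

/-- the coloring function -/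
noncomputable def fD (x : Γ → ℕ → Bool) : ℕ :=
  if h : ∃ i, x ∈ (cellAt hproper P hext r i).cond then
    (cellAt hproper P hext r (Nat.find h)).color else 0



/-! ### Structural lemmas -/

section Lemmas

variable {hproper : ∀ (γ : Γ) (ρ : ℝ), (Metric.closedBall γ ρ).Finite}
variable {P : Set (FPC Γ)} {hext : IsExtendable P} {r : ℕ → ℝ}

lemma sRho_nonneg (L : List (Cell Γ)) (m : ℕ) : 0 ≤ sRho r L m := by
  have h1 := listMax_nonneg (L.map fun c => r c.color)
  have h2 := listMax_nonneg (L.map Cell.rho)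
  have h3 := listMax_nonneg (L.map Cell.D)
  have : (0:ℝ) ≤ m := Nat.cast_nonneg m
  unfold sRho sRmax; linarith

lemma sM_nonneg (L : List (Cell Γ)) (m : ℕ) : 0 ≤ sM hproper P hext r L m :=
  listMax_nonneg _

lemma sRmax_nonneg (L : List (Cell Γ)) : 0 ≤ sRmax r L := listMax_nonneg _

lemma sRho_le_sD (L : List (Cell Γ)) (m : ℕ) :
    sRho r L m ≤ sD hproper P hext r L m := by
  have h1 := sRho_nonneg (r := r) L m
  have h2 := sM_nonneg (hproper := hproper) (P := P) (hext := hext) (r := r) L m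
  have h3 := sRmax_nonneg (r := r) L
  unfold sD; linarith

lemma mem_sBall_iff {L : List (Cell Γ)} {m : ℕ} {β : Γ} :
    β ∈ sBall hproper r L m ↔ dist β 1 ≤ sRho r L m := by
  simp [sBall, Set.Finite.mem_toFinset, Metric.mem_closedBall]

lemma one_mem_sBall {L : List (Cell Γ)} {m : ℕ} : (1:Γ) ∈ sBall hproper r L m := by
  rw [mem_sBall_iff]; simpa using sRho_nonneg (r := r) L m

/-- membership in the condition of a constructed cell -/
lemma mem_mkCell_cond {L : List (Cell Γ)} {m : ℕ} {t : Γ → Option ℕ} {x : Γ → ℕ → Bool} :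
    x ∈ (mkCell hproper P hext r L m t).cond ↔
      ((phiOf hproper r L m t ∈ P ∧ (phiOf hproper r L m t).1 1 = none) ∧
       ((∀ β, dist β 1 ≤ sRho r L m → occL L (sx β x) = t β) ∧
        x 1 m = true ∧
        (∀ β, dist β 1 ≤ sD hproper P hext r L m → β ≠ 1 → x β m = false) ∧
        (∀ β, sRho r L m < dist β 1 → dist β 1 ≤ sD hproper P hext r L m →
          occL L (sx β x) = none))) := by
  by_cases h : phiOf hproper r L m t ∈ P ∧ (phiOf hproper r L m t).1 1 = none
  · simp only [mkCell, if_pos h, mem_setOf_eq]; tauto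
  · simp only [mkCell, if_neg h]; simp [h]

lemma occL_spec {L : List (Cell Γ)} {y : Γ → ℕ → Bool} {i : ℕ}
    (h : occL L y = some i) : i < L.length ∧ y ∈ (L.getD i default).cond := by
  unfold occL at h
  by_cases hex : ∃ i, i < L.length ∧ y ∈ (L.getD i default).cond
  · rw [dif_pos hex] at h
    cases h
    exact Nat.find_spec hex
  · rw [dif_neg hex] at h; cases h

lemma occL_ne_none {L : List (Cell Γ)} {y : Γ → ℕ → Bool} {i : ℕ}
    (h1 : i < L.length) (h2 : y ∈ (L.getD i default).cond) : occL L y ≠ none := by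
  unfold occL
  rw [dif_pos ⟨i, h1, h2⟩]
  simp

lemma stageData_succ (m : ℕ) :
    stageData hproper P hext r (m+1) =
      stageData hproper P hext r m ++
        newStage hproper P hext r (stageData hproper P hext r m) m := rfl

lemma newStage_length (L : List (Cell Γ)) (m : ℕ) :
    (newStage hproper P hext r L m).length = (sCfgs hproper r L m).toList.length := by
  simp [newStage]

lemma sCfgs_nonempty (L : List (Cell Γ)) (m : ℕ) :
    (sCfgs hproper r L m).Nonempty := by
  refine Finset.Nonempty.image ⟨fun γ _ => none, ?_⟩ _
  rw [Finset.mem_pi]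
  intro a _
  exact Finset.mem_insert_self _ _

lemma length_stageData_ge (m : ℕ) : m ≤ (stageData hproper P hext r m).length := by
  induction m with
  | zero => simp
  | succ k ih =>
    rw [stageData_succ, List.length_append, newStage_length]
    have : (sCfgs hproper r (stageData hproper P hext r k) k).toList.length ≠ 0 := by
      simp only [Finset.length_toList]
      exact Finset.card_ne_zero_of_mem (sCfgs_nonempty _ k).choose_spec
    omega

lemma stageData_prefix {m m' : ℕ} (h : m ≤ m') :
    stageData hproper P hext r m <+: stageData hproper P hext r m' := by
  induction m' with
  | zero => simp_all
  | succ k ih =>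
    rcases Nat.lt_or_ge m (k+1) with hk | hk
    · exact (ih (Nat.lt_succ_iff.1 hk)).trans ⟨_, (stageData_succ k).symm⟩
    · have : m = k + 1 := le_antisymm h hk
      subst this; exact List.prefix_refl _

lemma stageData_length_mono {m m' : ℕ} (h : m ≤ m') :
    (stageData hproper P hext r m).length ≤ (stageData hproper P hext r m').length :=
  (stageData_prefix h).length_le

lemma cellAt_eq {M i : ℕ} (h : i < (stageData hproper P hext r M).length) :
    (stageData hproper P hext r M).getD i default = cellAt hproper P hext r i := by
  unfold cellAt
  have h2 : i < (stageData hproper P hext r (i+1)).length :=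
    lt_of_lt_of_le (Nat.lt_succ_self i) (length_stageData_ge (i+1))
  rcases Nat.le_total M (i+1) with hM | hM
  · have hpre := stageData_prefix (hproper := hproper) (P := P) (hext := hext) (r := r) hM
    rw [List.getD_eq_getElem _ _ h, List.getD_eq_getElem _ _ h2]
    exact List.IsPrefix.getElem hpre h
  · have hpre := stageData_prefix (hproper := hproper) (P := P) (hext := hext) (r := r) hM
    rw [List.getD_eq_getElem _ _ h, List.getD_eq_getElem _ _ h2]
    exact (List.IsPrefix.getElem hpre h2).symm

lemma valid_of_mem {i : ℕ} {x : Γ → ℕ → Bool}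
    (h : x ∈ (cellAt hproper P hext r i).cond) :
    i < (stageData hproper P hext r (i+1)).length := by
  by_contra hc
  push_neg at hc
  unfold cellAt at h
  rw [List.getD_eq_default _ _ hc] at h
  have hd : (default : Cell Γ).cond = ∅ := rfl
  rw [hd] at h
  exact h

lemma mem_block {M i : ℕ} (h : i < (stageData hproper P hext r M).length) :
    ∃ m, m < M ∧ (stageData hproper P hext r m).length ≤ i ∧
      i < (stageData hproper P hext r (m+1)).length := by
  induction M with
  | zero => simp [stageData] at h
  | succ k ih =>
    by_cases hk : i < (stageData hproper P hext r k).length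
    · obtain ⟨m, h1, h2, h3⟩ := ih hk
      exact ⟨m, Nat.lt_succ_of_lt h1, h2, h3⟩
    · push_neg at hk
      exact ⟨k, Nat.lt_succ_self k, hk, h⟩

/-- every valid cell comes from a block -/
lemma block_spec {i : ℕ} (h : i < (stageData hproper P hext r (i+1)).length) :
    ∃ m t, t ∈ sCfgs hproper r (stageData hproper P hext r m) m ∧
      cellAt hproper P hext r i = mkCell hproper P hext r (stageData hproper P hext r m) m t ∧
      (stageData hproper P hext r m).length ≤ i ∧
      i < (stageData hproper P hext r (m+1)).length := by
  obtain ⟨m, _, h2, h3⟩ := mem_block h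
  refine ⟨m, ?_⟩
  have hcell := cellAt_eq (hproper := hproper) (P := P) (hext := hext) (r := r) h3
  have h3' := h3
  rw [stageData_succ, List.length_append, newStage_length] at h3'
  have hlen : i - (stageData hproper P hext r m).length <
      (sCfgs hproper r (stageData hproper P hext r m) m).toList.length := by omega
  refine ⟨(sCfgs hproper r (stageData hproper P hext r m) m).toList[i -
      (stageData hproper P hext r m).length], ?_, ?_, h2, h3⟩
  · exact Finset.mem_toList.1 (List.getElem_mem _)
  · rw [← hcell, stageData_succ]
    rw [List.getD_eq_getElem _ _ (by rw [List.length_append, newStage_length]; omega)]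
    rw [List.getElem_append_right h2]
    simp only [newStage, List.getElem_map]

lemma stage_of_block {i m : ℕ} {t : Γ → Option ℕ}
    (h : cellAt hproper P hext r i = mkCell hproper P hext r (stageData hproper P hext r m) m t) :
    (cellAt hproper P hext r i).stage = m := by rw [h]; rfl


lemma cellAt_mem {M i : ℕ} (h : i < (stageData hproper P hext r M).length) :
    cellAt hproper P hext r i ∈ stageData hproper P hext r M := by
  rw [← cellAt_eq h, List.getD_eq_getElem _ _ h]
  exact List.getElem_mem _

lemma cfg_none_outside {L : List (Cell Γ)} {m : ℕ} {t : Γ → Option ℕ}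
    (ht : t ∈ sCfgs hproper r L m) {γ : Γ} (hγ : γ ∉ sBall hproper r L m) : t γ = none := by
  classical
  obtain ⟨g, _, rfl⟩ := Finset.mem_image.1 ht
  exact dif_neg hγ

lemma cfg_val_lt {L : List (Cell Γ)} {m : ℕ} {t : Γ → Option ℕ}
    (ht : t ∈ sCfgs hproper r L m) {γ : Γ} {i : ℕ} (h : t γ = some i) : i < L.length := by
  classical
  obtain ⟨g, hg, rfl⟩ := Finset.mem_image.1 ht
  rw [Finset.mem_pi] at hg
  have h' : (if hh : γ ∈ sBall hproper r L m then g γ hh else none) = some i := h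
  by_cases hγ : γ ∈ sBall hproper r L m
  · rw [dif_pos hγ] at h'
    have := hg γ hγ
    rw [h'] at this
    rcases Finset.mem_insert.1 this with h2 | h2
    · cases h2
    · obtain ⟨a, ha, ha'⟩ := Finset.mem_image.1 h2
      cases ha'
      exact Finset.mem_range.1 ha
  · rw [dif_neg hγ] at h'
    cases h'

/-- the key numeric bound -/
lemma color_bound {i j : ℕ}
    (hi : i < (stageData hproper P hext r (i+1)).length)
    (hj : j < (stageData hproper P hext r (j+1)).length)
    (hij : i ≤ j) :
    2 * r (cellAt hproper P hext r i).color + 1 ≤ (cellAt hproper P hext r j).D := by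
  obtain ⟨mi, ti, hti, hci, hli, hui⟩ := block_spec hi
  obtain ⟨mj, tj, htj, hcj, hlj, huj⟩ := block_spec hj
  have hmm : mi ≤ mj := by
    by_contra hc
    push_neg at hc
    have h1 : (stageData hproper P hext r (mj+1)).length ≤
        (stageData hproper P hext r mi).length := stageData_length_mono hc
    omega
  have hD : (cellAt hproper P hext r j).D =
      sD hproper P hext r (stageData hproper P hext r mj) mj := by rw [hcj]; rfl
  rcases eq_or_lt_of_le hmm with heq | hlt
  · subst heq
    have hcol : (cellAt hproper P hext r i).color =
        sColor hproper P hext r (stageData hproper P hext r mi) mi ti := by rw [hci]; rfl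
    have hle : r (sColor hproper P hext r (stageData hproper P hext r mi) mi ti) ≤
        sM hproper P hext r (stageData hproper P hext r mi) mi := by
      apply le_listMax
      exact List.mem_map_of_mem (Finset.mem_toList.2 hti)
    rw [hD, hcol]
    have h1 := sRho_nonneg (r := r) (stageData hproper P hext r mi) mi
    have h2 := sRmax_nonneg (r := r) (stageData hproper P hext r mi)
    unfold sD
    linarith
  · have hmem : cellAt hproper P hext r i ∈ stageData hproper P hext r mj := by
      have h1 : cellAt hproper P hext r i ∈ stageData hproper P hext r (mi+1) :=
        cellAt_mem hui
      exact (stageData_prefix hlt).subset h1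
    have hle : r (cellAt hproper P hext r i).color ≤
        sRmax r (stageData hproper P hext r mj) := by
      apply le_listMax
      exact List.mem_map_of_mem hmem
    rw [hD]
    have h1 := sRho_nonneg (r := r) (stageData hproper P hext r mj) mj
    have h2 := sM_nonneg (hproper := hproper) (P := P) (hext := hext) (r := r)
      (stageData hproper P hext r mj) mj
    unfold sD
    linarith

lemma no_lower_occ {m : ℕ} {t : Γ → Option ℕ} {x : Γ → ℕ → Bool}
    (h : x ∈ (mkCell hproper P hext r (stageData hproper P hext r m) m t).cond)
    {i : ℕ} (hi : i < (stageData hproper P hext r m).length)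
    (hx : x ∈ (cellAt hproper P hext r i).cond) : False := by
  obtain ⟨hgood, hc1, _, _, _⟩ := mem_mkCell_cond.1 h
  have h1 : occL (stageData hproper P hext r m) (sx 1 x) = t 1 := by
    apply hc1
    simp [sRho_nonneg (r := r) (stageData hproper P hext r m) m]
  rw [sx_one] at h1
  have h2 : t 1 = none := by
    have := hgood.2
    unfold phiOf at this
    simp only at this
    rw [if_pos (one_mem_sBall)] at this
    exact Option.map_eq_none_iff.1 this
  rw [h2] at h1
  exact occL_ne_none hi (by rw [cellAt_eq hi]; exact hx) h1

lemma cfg_eq_of_mem {L : List (Cell Γ)} {m : ℕ} {t t' : Γ → Option ℕ} {x : Γ → ℕ → Bool}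
    (ht : t ∈ sCfgs hproper r L m) (ht' : t' ∈ sCfgs hproper r L m)
    (h : x ∈ (mkCell hproper P hext r L m t).cond)
    (h' : x ∈ (mkCell hproper P hext r L m t').cond) : t = t' := by
  obtain ⟨_, hc1, _, _, _⟩ := mem_mkCell_cond.1 h
  obtain ⟨_, hc1', _, _, _⟩ := mem_mkCell_cond.1 h'
  funext β
  by_cases hβ : β ∈ sBall hproper r L m
  · rw [← hc1 β (mem_sBall_iff.1 hβ), ← hc1' β (mem_sBall_iff.1 hβ)]
  · rw [cfg_none_outside ht hβ, cfg_none_outside ht' hβ]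

/-- two cells containing a common point are equal (as cells). -/
lemma same_cell {i j : ℕ} {x : Γ → ℕ → Bool}
    (hx : x ∈ (cellAt hproper P hext r i).cond)
    (hy : x ∈ (cellAt hproper P hext r j).cond) :
    cellAt hproper P hext r i = cellAt hproper P hext r j := by
  obtain ⟨mi, ti, hti, hci, hli, hui⟩ := block_spec (valid_of_mem hx)
  obtain ⟨mj, tj, htj, hcj, hlj, huj⟩ := block_spec (valid_of_mem hy)
  rcases lt_trichotomy mi mj with hlt | heq | hlt
  · exfalso
    refine no_lower_occ (hcj ▸ hy) (i := i) ?_ hx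
    exact lt_of_lt_of_le hui (stageData_length_mono hlt)
  · subst heq
    have : ti = tj := by
      refine cfg_eq_of_mem hti htj (hci ▸ hx) (hcj ▸ hy)
    rw [hci, hcj, this]
  · exfalso
    refine no_lower_occ (hci ▸ hx) (i := j) ?_ hy
    exact lt_of_lt_of_le huj (stageData_length_mono hlt)

lemma fD_eq {i : ℕ} {x : Γ → ℕ → Bool} (h : x ∈ (cellAt hproper P hext r i).cond) :
    fD hproper P hext r x = (cellAt hproper P hext r i).color := by
  unfold fD
  rw [dif_pos ⟨i, h⟩]
  rw [same_cell (Nat.find_spec (⟨i, h⟩ : ∃ i, x ∈ (cellAt hproper P hext r i).cond)) h]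

lemma occL_cell {M i : ℕ} {x : Γ → ℕ → Bool}
    (hiM : i < (stageData hproper P hext r M).length)
    (hx : x ∈ (cellAt hproper P hext r i).cond) :
    ∃ j, occL (stageData hproper P hext r M) x = some j ∧
      cellAt hproper P hext r j = cellAt hproper P hext r i := by
  have hne := occL_ne_none hiM (by rw [cellAt_eq hiM]; exact hx)
  rcases ho : occL (stageData hproper P hext r M) x with _ | j
  · exact absurd ho hne
  · obtain ⟨hj1, hj2⟩ := occL_spec ho
    rw [cellAt_eq hj1] at hj2
    exact ⟨j, rfl, same_cell hj2 hx⟩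

lemma psi_mem_P {L : List (Cell Γ)} {m : ℕ} {t : Γ → Option ℕ}
    (hgood : phiOf hproper r L m t ∈ P ∧ (phiOf hproper r L m t).1 1 = none) :
    (mkCell hproper P hext r L m t).psi ∈ P := by
  show insertP (phiOf hproper r L m t) 1 (sColor hproper P hext r L m t) ∈ P
  unfold sColor cellColor
  rw [dif_pos hgood]
  exact Nat.find_spec (hext _ hgood.1 1 hgood.2)

lemma psi_at_one {L : List (Cell Γ)} {m : ℕ} {t : Γ → Option ℕ} :
    (mkCell hproper P hext r L m t).psi.1 1 =
      some (mkCell hproper P hext r L m t).color := by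
  show (insertP _ 1 _).1 1 = _
  simp [insertP, mkCell]

lemma psi_at_ne {L : List (Cell Γ)} {m : ℕ} {t : Γ → Option ℕ} {β : Γ} (hβ : β ≠ 1) :
    (mkCell hproper P hext r L m t).psi.1 β = (phiOf hproper r L m t).1 β := by
  show (insertP _ 1 _).1 β = _
  simp [insertP, hβ]


lemma dist_rel (hinv : ∀ γ δ g : Γ, dist (γ * g) (δ * g) = dist γ δ) (δ b : Γ) :
    dist (δ * b⁻¹) 1 = dist δ b := by
  have h := hinv (δ * b⁻¹) 1 b
  simpa using h.symm

/-- The Soundness Lemma: any finite partial coloring consistent with the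
occurrence structure of an arbitrary point `x` lies in `P`. -/
lemma soundness
    (hinv : ∀ γ δ g : Γ, dist (γ * g) (δ * g) = dist γ δ)
    (hP : IsGammaIdeal P) (hr0 : ∀ c, 0 ≤ r c) (hPloc : P = LocallyIn P r)
    (x : Γ → ℕ → Bool) (φ : FPC Γ)
    (hφ : ∀ δ c, φ.1 δ = some c → ∃ i, sx δ x ∈ (cellAt hproper P hext r i).cond ∧
        c = (cellAt hproper P hext r i).color) :
    φ ∈ P := by
  classical
  rw [hPloc]
  intro γ c hγc
  set occ : Finset Γ := ((hproper γ (r c)).toFinset).filter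
    (fun δ => ∃ i, sx δ x ∈ (cellAt hproper P hext r i).cond) with hoccdef
  have hmemocc : ∀ {δ : Γ}, δ ∈ occ ↔ (dist δ γ ≤ r c ∧
      ∃ i, sx δ x ∈ (cellAt hproper P hext r i).cond) := by
    intro δ
    rw [hoccdef, Finset.mem_filter, Set.Finite.mem_toFinset, Metric.mem_closedBall]
  have hγocc : γ ∈ occ := by
    rw [hmemocc]
    refine ⟨by simpa [dist_self] using hr0 c, ?_⟩
    obtain ⟨i, hi, _⟩ := hφ γ c hγc
    exact ⟨i, hi⟩
  set idx : Γ → ℕ := fun δ =>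
    if h : ∃ i, sx δ x ∈ (cellAt hproper P hext r i).cond then Nat.find h else 0 with hidxdef
  obtain ⟨b, hbocc, hbmax⟩ := Finset.exists_max_image occ idx ⟨γ, hγocc⟩
  have hbex : ∃ i, sx b x ∈ (cellAt hproper P hext r i).cond := (hmemocc.1 hbocc).2
  set jb : ℕ := idx b with hjbdef
  have hjb : sx b x ∈ (cellAt hproper P hext r jb).cond := by
    rw [hjbdef, hidxdef]
    simp only [dif_pos hbex]
    exact Nat.find_spec hbex
  obtain ⟨mb, tb, htb, hcb, hlb, hub⟩ := block_spec (valid_of_mem hjb)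
  have hcond := mem_mkCell_cond.1 (hcb ▸ hjb)
  obtain ⟨hgood, hc1, hc2a, hc2c, hc3⟩ := hcond
  -- the reference coloring
  have hApsi : (cellAt hproper P hext r jb).psi ∈ P := by
    rw [hcb]; exact psi_mem_P hgood
  have hAP : shiftP b⁻¹ (cellAt hproper P hext r jb).psi ∈ P := hP.1 _ _ hApsi
  refine hP.2 _ hAP _ ?_
  -- key numeric bound
  have hrc : 2 * r c + 1 ≤ (cellAt hproper P hext r jb).D := by
    obtain ⟨iγ, hiγ, hciγ⟩ := hφ γ c hγc
    have hγex : ∃ i, sx γ x ∈ (cellAt hproper P hext r i).cond := ⟨iγ, hiγ⟩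
    have hjγ : sx γ x ∈ (cellAt hproper P hext r (idx γ)).cond := by
      rw [hidxdef]
      simp only [dif_pos hγex]
      exact Nat.find_spec hγex
    have hcol : (cellAt hproper P hext r (idx γ)).color = c := by
      rw [same_cell hjγ hiγ, ← hciγ]
    have hle : idx γ ≤ jb := hbmax γ hγocc
    have := color_bound (valid_of_mem hjγ) (valid_of_mem hjb) hle
    rwa [hcol] at this
  have hDb : (cellAt hproper P hext r jb).D =
      sD hproper P hext r (stageData hproper P hext r mb) mb := by rw [hcb]; rfl
  -- the restriction claim
  intro δ
  show (if dist γ δ ≤ r c then φ.1 δ else none) = none ∨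
    (if dist γ δ ≤ r c then φ.1 δ else none) =
      (cellAt hproper P hext r jb).psi.1 (δ * b⁻¹)
  by_cases hd : dist γ δ ≤ r c
  · rw [if_pos hd]
    rcases hv : φ.1 δ with _ | cδ
    · exact Or.inl rfl
    · right
      obtain ⟨iδ, hiδ, hciδ⟩ := hφ δ cδ hv
      have hδocc : δ ∈ occ := by
        rw [hmemocc]
        exact ⟨by rwa [dist_comm], ⟨iδ, hiδ⟩⟩
      have hδex : ∃ i, sx δ x ∈ (cellAt hproper P hext r i).cond := ⟨iδ, hiδ⟩
      set jδ : ℕ := idx δ with hjδdef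
      have hjδ : sx δ x ∈ (cellAt hproper P hext r jδ).cond := by
        rw [hjδdef, hidxdef]
        simp only [dif_pos hδex]
        exact Nat.find_spec hδex
      have hcδ2 : (cellAt hproper P hext r jδ).color = cδ := by
        rw [same_cell hjδ hiδ, ← hciδ]
      have hjle : jδ ≤ jb := hbmax δ hδocc
      obtain ⟨mδ, tδ, htδ, hcδblk, hlδ, huδ⟩ := block_spec (valid_of_mem hjδ)
      have hmle : mδ ≤ mb := by
        by_contra hcon
        push_neg at hcon
        have := stageData_length_mono (hproper := hproper) (P := P) (hext := hext)
          (r := r) (show mb + 1 ≤ mδ by omega)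
        omega
      have hdistδb : dist δ b ≤ 2 * r c := by
        have h1 : dist δ γ ≤ r c := by rwa [dist_comm]
        have h2 : dist b γ ≤ r c := (hmemocc.1 hbocc).1
        have := dist_triangle δ γ b
        rw [dist_comm γ b] at this
        linarith
      have hβ : dist (δ * b⁻¹) 1 = dist δ b := dist_rel hinv δ b
      rcases eq_or_lt_of_le hmle with hmeq | hmlt
      · -- same stage: δ must equal b
        by_cases hδb : δ = b
        · subst hδb
          have hcells := same_cell hjδ hjb
          rw [mul_inv_cancel]
          rw [hcb, psi_at_one, ← hcb, ← hcells, hcδ2]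
        · exfalso
          -- headers clash
          have htrue : x δ mb = true := by
            have := mem_mkCell_cond.1 (hcδblk ▸ hjδ)
            have h2a := this.2.2.1
            rw [hmeq] at h2a
            simpa [sx] using h2a
          have hfalse : x δ mb = false := by
            have hdd : dist (δ * b⁻¹) 1 ≤
                sD hproper P hext r (stageData hproper P hext r mb) mb := by
              rw [hβ]
              rw [hDb] at hrc
              linarith
            have hne1 : δ * b⁻¹ ≠ 1 := by
              intro hcon
              exact hδb (by
                have := congrArg (fun z => z * b) hcon
                simpa using this)
            have := hc2c (δ * b⁻¹) hdd hne1
            simpa [sx, inv_mul_cancel_right] using this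
          rw [htrue] at hfalse
          cases hfalse
      · -- earlier stage
        have hjδlen : jδ < (stageData hproper P hext r mb).length :=
          lt_of_lt_of_le huδ (stageData_length_mono (show mδ + 1 ≤ mb by omega))
        have hoccδ : occL (stageData hproper P hext r mb) (sx δ x) ≠ none :=
          occL_ne_none hjδlen (by rw [cellAt_eq hjδlen]; exact hjδ)
        have hsxx : sx (δ * b⁻¹) (sx b x) = sx δ x := by
          rw [sx_sx, inv_mul_cancel_right]
        have hdinball : dist (δ * b⁻¹) 1 ≤ sRho r (stageData hproper P hext r mb) mb := by
          by_contra hcon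
          push_neg at hcon
          refine hoccδ ?_
          rw [← hsxx]
          refine hc3 _ hcon ?_
          rw [hβ]
          rw [hDb] at hrc
          linarith
        obtain ⟨j', hj'1, hj'2⟩ := occL_cell hjδlen hjδ
        have htbβ : tb (δ * b⁻¹) = some j' := by
          rw [← hj'1, ← hsxx]
          exact (hc1 _ hdinball).symm
        have hne1 : δ * b⁻¹ ≠ 1 := by
          intro hcon
          have hδb : δ = b := by
            have := congrArg (fun z => z * b) hcon
            simpa using this
          subst hδb
          have hcells := same_cell hjδ hjb
          have : mδ = mb := by
            rw [← stage_of_block hcδblk, ← stage_of_block hcb, hcells]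
          omega
        rw [hcb, psi_at_ne hne1]
        have hj'len : j' < (stageData hproper P hext r mb).length := (occL_spec hj'1).1
        unfold phiOf
        simp only
        rw [if_pos (mem_sBall_iff.2 hdinball), htbβ]
        simp only [Option.map_some]
        rw [cellAt_eq hj'len, hj'2, hcδ2]
  · rw [if_neg hd]
    exact Or.inl rfl


/-! ### Topology -/

lemma continuous_sx (γ : Γ) : Continuous (sx γ : (Γ → ℕ → Bool) → (Γ → ℕ → Bool)) :=
  continuous_pi fun δ => continuous_apply (δ * γ)

lemma occL_eq_some_iff {L : List (Cell Γ)} {y : Γ → ℕ → Bool} {i : ℕ} :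
    occL L y = some i ↔ (i < L.length ∧ y ∈ (L.getD i default).cond ∧
      ∀ j < i, y ∉ (L.getD j default).cond) := by
  classical
  unfold occL
  by_cases hex : ∃ i, i < L.length ∧ y ∈ (L.getD i default).cond
  · rw [dif_pos hex]
    constructor
    · intro h
      have hfind := Nat.find_eq_iff hex (m := i)
      have hi := hfind.1 (by cases h; rfl)
      refine ⟨hi.1.1, hi.1.2, fun j hj hmem => ?_⟩
      by_cases hjl : j < L.length
      · exact hi.2 j hj ⟨hjl, hmem⟩
      · rw [List.getD_eq_default _ _ (by omega)] at hmem
        exact hmem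
    · intro ⟨h1, h2, h3⟩
      have : Nat.find hex = i := by
        rw [Nat.find_eq_iff]
        exact ⟨⟨h1, h2⟩, fun j hj hc => h3 j hj hc.2⟩
      rw [this]
  · rw [dif_neg hex]
    constructor
    · intro h; cases h
    · intro ⟨h1, h2, _⟩
      exact absurd ⟨i, h1, h2⟩ hex

lemma occL_clopen {L : List (Cell Γ)}
    (hL : ∀ j, j < L.length → IsClopen (L.getD j default).cond) (v : Option ℕ) :
    IsClopen {y : Γ → ℕ → Bool | occL L y = v} := by
  classical
  have hclo : ∀ j, IsClopen (L.getD j default).cond := by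
    intro j
    by_cases hj : j < L.length
    · exact hL j hj
    · rw [List.getD_eq_default _ _ (by omega)]
      have : (default : Cell Γ).cond = ∅ := rfl
      rw [this]; exact isClopen_empty
  rcases v with _ | i
  · have : {y : Γ → ℕ → Bool | occL L y = none} =
        ⋂ j ∈ Finset.range L.length, ((L.getD j default).cond)ᶜ := by
      ext y
      simp only [mem_setOf_eq, Set.mem_iInter, Finset.mem_range, Set.mem_compl_iff]
      constructor
      · intro h j hj hmem
        exact occL_ne_none hj hmem h
      · intro h
        unfold occL
        rw [dif_neg]
        rintro ⟨j, hj1, hj2⟩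
        exact h j hj1 hj2
    rw [this]
    exact isClopen_biInter_finset fun j _ => (hclo j).compl
  · have : {y : Γ → ℕ → Bool | occL L y = some i} =
        (if i < L.length then (L.getD i default).cond else ∅) ∩
          ⋂ j ∈ Finset.range i, ((L.getD j default).cond)ᶜ := by
      ext y
      simp only [mem_setOf_eq, Set.mem_inter_iff, Set.mem_iInter, Finset.mem_range,
        Set.mem_compl_iff, occL_eq_some_iff]
      constructor
      · intro ⟨h1, h2, h3⟩
        rw [if_pos h1]
        exact ⟨h2, h3⟩
      · intro ⟨h1, h2⟩
        by_cases hi : i < L.length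
        · rw [if_pos hi] at h1
          exact ⟨hi, h1, h2⟩
        · rw [if_neg hi] at h1
          exact absurd h1 (by simp)
    rw [this]
    refine IsClopen.inter ?_ (isClopen_biInter_finset fun j _ => (hclo j).compl)
    by_cases hi : i < L.length
    · rw [if_pos hi]; exact hclo i
    · rw [if_neg hi]; exact isClopen_empty

lemma eval_clopen {β : Γ} {k : ℕ} {b : Bool} :
    IsClopen {x : Γ → ℕ → Bool | x β k = b} := by
  have hc : Continuous (fun x : Γ → ℕ → Bool => x β k) :=
    (continuous_apply k).comp (continuous_apply β)
  exact (isClopen_discrete {b}).preimage hc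

lemma mkCell_clopen {L : List (Cell Γ)} {m : ℕ} {t : Γ → Option ℕ}
    (hL : ∀ j, j < L.length → IsClopen (L.getD j default).cond) :
    IsClopen (mkCell hproper P hext r L m t).cond := by
  classical
  unfold mkCell
  simp only
  by_cases hgood : phiOf hproper r L m t ∈ P ∧ (phiOf hproper r L m t).1 1 = none
  · rw [if_pos hgood]
    have e1 : {x : Γ → ℕ → Bool |
        (∀ β, dist β 1 ≤ sRho r L m → occL L (sx β x) = t β) ∧
        x 1 m = true ∧
        (∀ β, dist β 1 ≤ sD hproper P hext r L m → β ≠ 1 → x β m = false) ∧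
        (∀ β, sRho r L m < dist β 1 → dist β 1 ≤ sD hproper P hext r L m →
          occL L (sx β x) = none)} =
        (⋂ β ∈ sBall hproper r L m, (sx β) ⁻¹' {y | occL L y = t β}) ∩
        ({x : Γ → ℕ → Bool | x 1 m = true} ∩
        ((⋂ β ∈ ((hproper 1 (sD hproper P hext r L m)).toFinset.filter (fun β => β ≠ 1)),
          {x : Γ → ℕ → Bool | x β m = false}) ∩
        (⋂ β ∈ ((hproper 1 (sD hproper P hext r L m)).toFinset.filter
            (fun β => sRho r L m < dist β 1)),
          (sx β) ⁻¹' {y | occL L y = none}))) := by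
      ext x
      simp only [mem_setOf_eq, Set.mem_inter_iff, Set.mem_iInter, Finset.mem_filter,
        Set.Finite.mem_toFinset, Metric.mem_closedBall, Set.mem_preimage, mem_sBall_iff]
      constructor
      · rintro ⟨h1, h2, h3, h4⟩
        refine ⟨fun β hβ => h1 β hβ, h2, fun β hβ => h3 β hβ.1 hβ.2,
          fun β hβ => h4 β hβ.2 hβ.1⟩
      · rintro ⟨h1, h2, h3, h4⟩
        exact ⟨fun β hβ => h1 β hβ, h2, fun β hβ1 hβ2 => h3 β ⟨hβ1, hβ2⟩,
          fun β hβ1 hβ2 => h4 β ⟨hβ2, hβ1⟩⟩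
    rw [e1]
    refine IsClopen.inter ?_ (IsClopen.inter eval_clopen (IsClopen.inter ?_ ?_))
    · exact isClopen_biInter_finset fun β _ =>
        (occL_clopen hL (t β)).preimage (continuous_sx β)
    · exact isClopen_biInter_finset fun β _ => eval_clopen
    · exact isClopen_biInter_finset fun β _ =>
        (occL_clopen hL none).preimage (continuous_sx β)
  · rw [if_neg hgood]
    exact isClopen_empty

lemma cellAt_clopen (i : ℕ) : IsClopen (cellAt hproper P hext r i).cond := by
  induction i using Nat.strong_induction_on with
  | _ i ih =>
    by_cases hval : i < (stageData hproper P hext r (i+1)).length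
    · obtain ⟨m, t, ht, hc, hl, hu⟩ := block_spec hval
      rw [hc]
      refine mkCell_clopen fun j hj => ?_
      rw [cellAt_eq hj]
      refine ih j ?_
      omega
    · unfold cellAt
      rw [List.getD_eq_default _ _ (by omega)]
      have : (default : Cell Γ).cond = ∅ := rfl
      rw [this]
      exact isClopen_empty


/-! ### Density -/

lemma exists_cyl1 {W : Set (ℕ → Bool)} (hW : IsOpen W) {z : ℕ → Bool} (hz : z ∈ W) :
    ∃ J : Finset ℕ, {g : ℕ → Bool | ∀ n ∈ J, g n = z n} ⊆ W := by
  obtain ⟨J, V, h1, h2⟩ := isOpen_pi_iff.1 hW z hz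
  refine ⟨J, fun g hg => h2 ?_⟩
  intro n hn
  rw [hg n hn]
  exact (h1 n hn).2

lemma exists_cylinder {u : Set (Γ → ℕ → Bool)} (hu : IsOpen u) {x₀ : Γ → ℕ → Bool}
    (hx : x₀ ∈ u) :
    ∃ F : Finset (Γ × ℕ), {y : Γ → ℕ → Bool | ∀ p ∈ F, y p.1 p.2 = x₀ p.1 p.2} ⊆ u := by
  classical
  obtain ⟨I, U, h1, h2⟩ := isOpen_pi_iff.1 hu x₀ hx
  have hch : ∀ a : Γ, ∃ J : Finset ℕ, a ∈ I →
      {g : ℕ → Bool | ∀ n ∈ J, g n = x₀ a n} ⊆ U a := by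
    intro a
    by_cases ha : a ∈ I
    · obtain ⟨J, hJ⟩ := exists_cyl1 (h1 a ha).1 (h1 a ha).2
      exact ⟨J, fun _ => hJ⟩
    · exact ⟨∅, fun h => absurd h ha⟩
  choose Jf hJf using hch
  refine ⟨I.biUnion (fun a => (Jf a).image (fun n => (a, n))), fun y hy => h2 ?_⟩
  intro a ha
  refine hJf a ha ?_
  intro n hn
  exact hy (a, n) (Finset.mem_biUnion.2 ⟨a, ha, Finset.mem_image_of_mem _ hn⟩)

lemma stage_lt_of_lt_length {M j : ℕ}
    (hj : j < (stageData hproper P hext r M).length) :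
    (cellAt hproper P hext r j).stage < M := by
  obtain ⟨m, hm, h2, h3⟩ := mem_block hj
  have hval : j < (stageData hproper P hext r (j+1)).length :=
    lt_of_lt_of_le (Nat.lt_succ_self j) (length_stageData_ge (j+1))
  obtain ⟨m', t', ht', hc', hl', hu'⟩ := block_spec hval
  have hmm : m' = m := by
    by_contra hne
    rcases Nat.lt_or_ge m' m with hlt | hge
    · have := stageData_length_mono (hproper := hproper) (P := P) (hext := hext) (r := r)
        (show m' + 1 ≤ m by omega)
      omega
    · have := stageData_length_mono (hproper := hproper) (P := P) (hext := hext) (r := r)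
        (show m + 1 ≤ m' by omega)
      omega
  rw [stage_of_block hc', hmm]
  exact hm

lemma O_dense
    (hinv : ∀ γ δ g : Γ, dist (γ * g) (δ * g) = dist γ δ)
    (hP : IsGammaIdeal P) (hr0 : ∀ c, 0 ≤ r c) (hPloc : P = LocallyIn P r) :
    Dense (⋃ i, (cellAt hproper P hext r i).cond) := by
  classical
  rw [dense_iff_inter_open]
  rintro u hu ⟨x₀, hx₀⟩
  obtain ⟨F, hF⟩ := exists_cylinder hu hx₀
  set N : ℕ := (F.sup Prod.snd) + 1 with hN
  set Rpos : ℝ := listMax (F.toList.map (fun p => dist p.1 1)) with hRpos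
  set mst : ℕ := max N (Nat.ceil Rpos) with hmst
  set L : List (Cell Γ) := stageData hproper P hext r mst with hL
  set ρ : ℝ := sRho r L mst with hρ
  have hRρ : Rpos ≤ ρ := by
    have h1 : Rpos ≤ (Nat.ceil Rpos : ℝ) := Nat.le_ceil Rpos
    have h2 : (Nat.ceil Rpos : ℝ) ≤ (mst : ℝ) := by
      exact_mod_cast le_max_right N (Nat.ceil Rpos)
    have h3 : (mst : ℝ) ≤ ρ := by
      rw [hρ]
      unfold sRho
      have := sRmax_nonneg (r := r) L
      have := listMax_nonneg (L.map Cell.rho)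
      have := listMax_nonneg (L.map Cell.D)
      linarith
    linarith
  set y : Γ → ℕ → Bool := fun δ k =>
    if (δ, k) ∈ F then x₀ δ k else (if δ = 1 ∧ k = mst then true else false) with hy
  have hyu : y ∈ u := by
    apply hF
    intro p hp
    rw [hy]
    simp only
    rw [if_pos (show (p.1, p.2) ∈ F from hp)]
  have hytrue : ∀ δ k, y δ k = true → (δ, k) ∈ F ∨ (δ = 1 ∧ k = mst) := by
    intro δ k h
    rw [hy] at h
    simp only at h
    by_cases h1 : (δ, k) ∈ F
    · exact Or.inl h1
    · rw [if_neg h1] at h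
      by_cases h2 : δ = 1 ∧ k = mst
      · exact Or.inr h2
      · rw [if_neg h2] at h
        cases h
  have hFlevel : ∀ δ k, (δ, k) ∈ F → k < N := by
    intro δ k h
    have : k ≤ F.sup Prod.snd := Finset.le_sup (f := Prod.snd) h
    omega
  have hFpos : ∀ δ k, (δ, k) ∈ F → dist δ 1 ≤ Rpos := by
    intro δ k h
    apply le_listMax
    refine List.mem_map.2 ⟨(δ, k), Finset.mem_toList.2 h, rfl⟩
  have hNle : N ≤ mst := le_max_left _ _
  -- occurrence headers
  have hocc_header : ∀ i δ, sx δ y ∈ (cellAt hproper P hext r i).cond →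
      y δ (cellAt hproper P hext r i).stage = true := by
    intro i δ hocc
    obtain ⟨m, t, ht, hc, hl, hu2⟩ := block_spec (valid_of_mem hocc)
    have := (mem_mkCell_cond.1 (hc ▸ hocc)).2.2.1
    rw [stage_of_block hc]
    simpa [sx] using this
  by_cases hcov : ∃ i, y ∈ (cellAt hproper P hext r i).cond
  · obtain ⟨i, hi⟩ := hcov
    exact ⟨y, Set.mem_inter hyu (Set.mem_iUnion.2 ⟨i, hi⟩)⟩
  · -- build a new cell covering `y` at position 1
    have hoccLy : occL L y = none := by
      unfold occL
      rw [dif_neg]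
      rintro ⟨j, hj1, hj2⟩
      rw [cellAt_eq hj1] at hj2
      exact hcov ⟨j, hj2⟩
    set t : Γ → Option ℕ := fun β => if dist β 1 ≤ ρ then occL L (sx β y) else none with ht
    have htmem : t ∈ sCfgs hproper r L mst := by
      rw [sCfgs, Finset.mem_image]
      refine ⟨fun γ _ => t γ, ?_, ?_⟩
      · rw [Finset.mem_pi]
        intro a _
        rcases hv : t a with _ | i
        · exact Finset.mem_insert_self _ _
        · refine Finset.mem_insert_of_mem (Finset.mem_image.2 ⟨i, Finset.mem_range.2 ?_, rfl⟩)
          rw [ht] at hv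
          simp only at hv
          by_cases hd : dist a 1 ≤ ρ
          · rw [if_pos hd] at hv
            exact (occL_spec hv).1
          · rw [if_neg hd] at hv
            cases hv
      · funext γ
        by_cases hγ : γ ∈ sBall hproper r L mst
        · rw [dif_pos hγ]
        · rw [dif_neg hγ, ht]
          simp only
          rw [if_neg (fun hc => hγ (mem_sBall_iff.2 hc))]
    have hphi1 : (phiOf hproper r L mst t).1 1 = none := by
      unfold phiOf
      simp only
      rw [if_pos one_mem_sBall, ht]
      simp only
      rw [if_pos (by simpa [dist_self] using sRho_nonneg (r := r) L mst), sx_one, hoccLy]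
      rfl
    have hphiP : phiOf hproper r L mst t ∈ P := by
      refine soundness (hproper := hproper) (hext := hext) hinv hP hr0 hPloc y _ ?_
      intro δ c hδc
      unfold phiOf at hδc
      simp only at hδc
      by_cases hδ : δ ∈ sBall hproper r L mst
      · rw [if_pos hδ] at hδc
        obtain ⟨j, hj1, hj2⟩ := Option.map_eq_some_iff.1 hδc
        rw [ht] at hj1
        simp only at hj1
        by_cases hd : dist δ 1 ≤ ρ
        · rw [if_pos hd] at hj1
          obtain ⟨hjlen, hjmem⟩ := occL_spec hj1
          rw [cellAt_eq hjlen] at hjmem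
          exact ⟨j, hjmem, by rw [← hj2, cellAt_eq hjlen]⟩
        · rw [if_neg hd] at hj1
          cases hj1
      · rw [if_neg hδ] at hδc
        cases hδc
    have hgood : phiOf hproper r L mst t ∈ P ∧ (phiOf hproper r L mst t).1 1 = none :=
      ⟨hphiP, hphi1⟩
    -- `y` satisfies the condition of the new cell
    have hymem : y ∈ (mkCell hproper P hext r L mst t).cond := by
      rw [mem_mkCell_cond]
      refine ⟨hgood, ?_, ?_, ?_, ?_⟩
      · intro β hβ
        rw [ht]
        simp only
        rw [if_pos hβ]
      · rw [hy]
        simp only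
        rw [if_neg (fun hc => by
          have := hFlevel 1 mst hc
          omega)]
        simp
      · intro β _ hβ1
        rw [hy]
        simp only
        rw [if_neg (fun hc => by
          have := hFlevel β mst hc
          omega), if_neg (fun hc => hβ1 hc.1)]
      · intro β hβ1 hβ2
        rcases hv : occL L (sx β y) with _ | j
        · rfl
        · exfalso
          obtain ⟨hjlen, hjmem⟩ := occL_spec hv
          rw [cellAt_eq hjlen] at hjmem
          have hhead := hocc_header j β hjmem
          have hstage : (cellAt hproper P hext r j).stage < mst := stage_lt_of_lt_length hjlen
          rcases hytrue β _ hhead with hc | hc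
          · have := hFpos β _ hc
            linarith
          · omega
    -- the new cell sits somewhere in the hierarchy
    have hcellmem : mkCell hproper P hext r L mst t ∈ stageData hproper P hext r (mst+1) := by
      rw [stageData_succ]
      refine List.mem_append_right _ ?_
      unfold newStage
      exact List.mem_map.2 ⟨t, Finset.mem_toList.2 htmem, rfl⟩
    obtain ⟨n, hn, hnEq⟩ := List.mem_iff_getElem.1 hcellmem
    have hyn : y ∈ (cellAt hproper P hext r n).cond := by
      rw [← cellAt_eq hn, List.getD_eq_getElem _ _ hn, hnEq]
      exact hymem
    exact ⟨y, Set.mem_inter hyu (Set.mem_iUnion.2 ⟨n, hyn⟩)⟩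


/-! ### Assembly -/

lemma O_isOpen : IsOpen (⋃ i, (cellAt hproper P hext r i).cond) :=
  isOpen_iUnion fun i => (cellAt_clopen i).isOpen

lemma O_residual
    (hinv : ∀ γ δ g : Γ, dist (γ * g) (δ * g) = dist γ δ)
    (hP : IsGammaIdeal P) (hr0 : ∀ c, 0 ≤ r c) (hPloc : P = LocallyIn P r) :
    (⋃ i, (cellAt hproper P hext r i).cond) ∈ residual (Γ → ℕ → Bool) :=
  residual_of_dense_open O_isOpen (O_dense hinv hP hr0 hPloc)

lemma fD_baire
    (hinv : ∀ γ δ g : Γ, dist (γ * g) (δ * g) = dist γ δ)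
    (hP : IsGammaIdeal P) (hr0 : ∀ c, 0 ≤ r c) (hPloc : P = LocallyIn P r) :
    BaireMFun (fD hproper P hext r) := by
  classical
  intro B _
  set U : Set (Γ → ℕ → Bool) :=
    ⋃ i, (if (cellAt hproper P hext r i).color ∈ B then (cellAt hproper P hext r i).cond
      else ∅) with hU
  have hUopen : IsOpen U := by
    refine isOpen_iUnion fun i => ?_
    by_cases h : (cellAt hproper P hext r i).color ∈ B
    · rw [if_pos h]; exact (cellAt_clopen i).isOpen
    · rw [if_neg h]; exact isOpen_empty
  refine ⟨U, hUopen, ?_⟩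
  have hsub : symmDiff (fD hproper P hext r ⁻¹' B) U ⊆
      (⋃ i, (cellAt hproper P hext r i).cond)ᶜ := by
    intro x hx
    intro hmem
    obtain ⟨_, ⟨i, rfl⟩, hi⟩ := hmem
    have hfd : fD hproper P hext r x = (cellAt hproper P hext r i).color := fD_eq hi
    have hiff : x ∈ fD hproper P hext r ⁻¹' B ↔ x ∈ U := by
      constructor
      · intro hB
        rw [hU, Set.mem_iUnion]
        refine ⟨i, ?_⟩
        have : x ∈ (if (cellAt hproper P hext r i).color ∈ B then
            (cellAt hproper P hext r i).cond else ∅) := by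
          rw [if_pos (by rwa [← hfd])]
          exact hi
        exact this
      · intro hxU
        rw [hU, Set.mem_iUnion] at hxU
        obtain ⟨j, hj⟩ := hxU
        have hj' : x ∈ (if (cellAt hproper P hext r j).color ∈ B then
            (cellAt hproper P hext r j).cond else ∅) := hj
        by_cases hcj : (cellAt hproper P hext r j).color ∈ B
        · rw [if_pos hcj] at hj'
          have : fD hproper P hext r x = (cellAt hproper P hext r j).color := fD_eq hj'
          rw [Set.mem_preimage, this]
          exact hcj
        · rw [if_neg hcj] at hj'
          exact absurd hj' (Set.notMem_empty x)
    rw [Set.symmDiff_def] at hx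
    rcases hx with ⟨h1, h2⟩ | ⟨h1, h2⟩
    · exact h2 (hiff.1 h1)
    · exact h2 (hiff.2 h1)
  refine IsMeagre.mono hsub ?_
  show (⋃ i, (cellAt hproper P hext r i).cond)ᶜᶜ ∈ residual _
  rw [compl_compl]
  exact O_residual hinv hP hr0 hPloc

noncomputable def sxH (γ : Γ) : (Γ → ℕ → Bool) ≃ₜ (Γ → ℕ → Bool) where
  toFun := sx γ
  invFun := sx γ⁻¹
  left_inv x := by rw [sx_sx, inv_mul_cancel, sx_one]
  right_inv x := by rw [sx_sx, mul_inv_cancel, sx_one]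
  continuous_toFun := continuous_sx γ
  continuous_invFun := continuous_sx γ⁻¹

lemma final_residual [Countable Γ]
    (hinv : ∀ γ δ g : Γ, dist (γ * g) (δ * g) = dist γ δ)
    (hP : IsGammaIdeal P) (hr0 : ∀ c, 0 ≤ r c) (hPloc : P = LocallyIn P r) :
    {x : Γ → ℕ → Bool | ∀ γ : Γ, ∃ i,
      sx γ x ∈ (cellAt hproper P hext r i).cond} ∈ residual (Γ → ℕ → Bool) := by
  have heq : {x : Γ → ℕ → Bool | ∀ γ : Γ, ∃ i,
      sx γ x ∈ (cellAt hproper P hext r i).cond} =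
      ⋂ γ : Γ, (sx γ) ⁻¹' (⋃ i, (cellAt hproper P hext r i).cond) := by
    ext x
    simp only [mem_setOf_eq, Set.mem_iInter, Set.mem_preimage, Set.mem_iUnion]
  rw [heq]
  refine countable_iInter_mem.2 fun γ => ?_
  refine residual_of_dense_open ?_ ?_
  · exact O_isOpen.preimage (continuous_sx γ)
  · exact (O_dense hinv hP hr0 hPloc).preimage (sxH γ).isOpenMap

end Lemmas

end Construction



/-- For every local extendable `Γ`-ideal `P`, the shift action of `Γ` on the product of
Cantor spaces `C^Γ` admits a Baire measurable `P`-coloring. -/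
theorem stmt16 {Γ : Type*} [Group Γ] [Countable Γ] [Infinite Γ] [DecidableEq Γ]
    [MetricSpace Γ]
    (hinv : ∀ γ δ g : Γ, dist (γ * g) (δ * g) = dist γ δ)
    (hproper : ∀ (γ : Γ) (r : ℝ), (Metric.closedBall γ r).Finite)
    (P : Set (FPC Γ)) (hP : IsGammaIdeal P) (hext : IsExtendable P) (hloc : IsLocal P) :
    ∃ f : (Γ → ℕ → Bool) → ℕ, BaireMFun f ∧
      {x : Γ → ℕ → Bool | (fun γ : Γ => f fun δ : Γ => x (δ * γ)) ∈ ColOf P}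
        ∈ residual (Γ → ℕ → Bool) := by
  obtain ⟨r, hr0, hPloc⟩ := hloc
  refine ⟨fD hproper P hext r, fD_baire (hproper := hproper) (hext := hext) hinv hP hr0 hPloc, ?_⟩
  refine Filter.mem_of_superset (final_residual (hproper := hproper) (hext := hext) hinv hP hr0 hPloc) ?_
  intro x hx
  simp only [mem_setOf_eq] at hx ⊢
  intro S
  refine soundness (hproper := hproper) (hext := hext) hinv hP hr0 hPloc x _ ?_
  intro δ c hδc
  have hδc' : (if δ ∈ S then some (fD hproper P hext r (sx δ x)) else none) = some c := hδc
  by_cases hδS : δ ∈ S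
  · rw [if_pos hδS] at hδc'
    obtain ⟨i, hi⟩ := hx δ
    refine ⟨i, hi, ?_⟩
    have h2 := fD_eq (hproper := hproper) (P := P) (hext := hext) (r := r) hi
    rw [h2] at hδc'
    exact (Option.some_injective _ hδc').symm
  · rw [if_neg hδS] at hδc'
    cases hδc'


end DescColor
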